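/- Every weak composition b with b ≥ a in dominance order and flat(b) = flat(a) is obtainable from a by a sequence of left swaps in which each swap exchanges a nonzero entry with a zero entry to its left; consequently b ∈ lswap(a). -/

import Mathlib

open MvPolynomial
open scoped Classical

noncomputable section

/-- Partial sum of the first `k` entries of a weak composition. -/
def psum {n : ℕ} (a : Fin n → ℕ) (k : ℕ) : ℕ :=
  ∑ i ∈ Finset.univ.filter (fun i : Fin n => (i : ℕ) < k), a i

/-- Dominance order: `Dom a b` means `b ≥ a`, i.e. every partial sum of `b`
is at least the corresponding partial sum of `a`. -/
def Dom {n : ℕ} (a b : Fin n → ℕ) : Prop := ∀ k : ℕ, psum a k ≤ psum b k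

/-- `flat a`: the list of nonzero entries of `a`, in order. -/
def flat {n : ℕ} (a : Fin n → ℕ) : List ℕ := (List.ofFn a).filter (· ≠ 0)

/-- The monomial `x^b`. -/
def mono {n : ℕ} (b : Fin n → ℕ) : MvPolynomial (Fin n) ℤ := ∏ i, X i ^ b i

/-- Finite set of weak compositions of length `n` with all entries `≤ N`. -/
def box (n N : ℕ) : Finset (Fin n → ℕ) := Fintype.piFinset fun _ => Finset.range (N + 1)

/-- A single slide move relative to the base composition `a`: a local move
`(…,0,k,…) → (…,i,j,…)` with `i + j = k`.  When `fixed = true` we additionally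
require `j > 0` whenever `k` occupies a position that is nonzero in `a`. -/
def SlideMove {n : ℕ} (a : Fin n → ℕ) (fixed : Bool) (b c : Fin n → ℕ) : Prop :=
  ∃ (p : ℕ) (hp : p + 1 < n) (i j : ℕ),
    b ⟨p, Nat.lt_of_succ_lt hp⟩ = 0 ∧
    i + j = b ⟨p + 1, hp⟩ ∧
    (fixed = true → a ⟨p + 1, hp⟩ ≠ 0 → 0 < j) ∧
    c = Function.update (Function.update b ⟨p, Nat.lt_of_succ_lt hp⟩ i) ⟨p + 1, hp⟩ j

/-- `b` is a slide of `a`. -/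
def Slides {n : ℕ} (a b : Fin n → ℕ) : Prop :=
  Relation.ReflTransGen (SlideMove a false) a b

/-- `b` is a fixed slide of `a`. -/
def FixSlides {n : ℕ} (a b : Fin n → ℕ) : Prop :=
  Relation.ReflTransGen (SlideMove a true) a b

/-- The monomial slide polynomial `M_a`. -/
def Mslide {n : ℕ} (a : Fin n → ℕ) : MvPolynomial (Fin n) ℤ :=
  ∑ b ∈ (box n (∑ i, a i)).filter (fun b => Dom a b ∧ flat b = flat a), mono b

/-- The fundamental slide polynomial `F_a`, as the generating function of slides. -/
def Fslide {n : ℕ} (a : Fin n → ℕ) : MvPolynomial (Fin n) ℤ :=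
  ∑ b ∈ (box n (∑ i, a i)).filter (fun b => Slides a b), mono b

/-- The fundamental particle polynomial `L_a`, the generating function of fixed slides. -/
def Lpart {n : ℕ} (a : Fin n → ℕ) : MvPolynomial (Fin n) ℤ :=
  ∑ b ∈ (box n (∑ i, a i)).filter (fun b => FixSlides a b), mono b

/-- A left swap: exchange entries `b i ≤ b j` with `i < j`. -/
def LSwap {n : ℕ} (b c : Fin n → ℕ) : Prop :=
  ∃ i j : Fin n, i < j ∧ b i ≤ b j ∧
    c = Function.update (Function.update b i (b j)) j (b i)


/-- A left swap exchanging a zero entry with a nonzero entry to its right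
(i.e. moving a nonzero entry leftward past a zero). -/
def ZSwap {n : ℕ} (b c : Fin n → ℕ) : Prop :=
  ∃ i j : Fin n, i < j ∧ b i = 0 ∧ b j ≠ 0 ∧
    c = Function.update (Function.update b i (b j)) j (b i)

section AuxLemmas

variable {n : ℕ}

lemma psum_mono (a : Fin n → ℕ) {k l : ℕ} (h : k ≤ l) : psum a k ≤ psum a l :=
  Finset.sum_le_sum_of_subset (by intro i; simp; omega)

lemma psum_congr {a b : Fin n → ℕ} {k : ℕ} (h : ∀ i : Fin n, (i:ℕ) < k → a i = b i) :
    psum a k = psum b k :=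
  Finset.sum_congr rfl (by intro i hi; simp at hi; exact h i hi)

lemma psum_stable {a : Fin n → ℕ} {t k : ℕ} (htk : t ≤ k)
    (h : ∀ i : Fin n, t ≤ (i:ℕ) → (i:ℕ) < k → a i = 0) : psum a k = psum a t := by
  refine (Finset.sum_subset ?_ ?_).symm
  · intro i; simp; omega
  · intro i hi hni; simp at hi hni; exact h i hni hi

lemma psum_succ (a : Fin n → ℕ) {k : ℕ} (h : k < n) :
    psum a (k+1) = psum a k + a ⟨k, h⟩ := by
  have he : (Finset.univ.filter (fun i : Fin n => (i:ℕ) < k+1))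
      = insert ⟨k,h⟩ (Finset.univ.filter (fun i : Fin n => (i:ℕ) < k)) := by
    ext i; simp [Fin.ext_iff]; omega
  rw [_root_.psum, he, Finset.sum_insert (by simp), add_comm]; rfl

lemma psum_swap (a : Fin n → ℕ) (r s : Fin n) (hrs : r ≠ s) {k : ℕ}
    (hr : (r:ℕ) < k) (hsk : (s:ℕ) < k) :
    psum (Function.update (Function.update a r (a s)) s (a r)) k = psum a k := by
  classical
  set S := Finset.univ.filter (fun i : Fin n => (i:ℕ) < k) with hS
  have hsS : s ∈ S := by simp [hS, hsk]
  have hrS : r ∈ S.erase s := by simp [hS, hr, hrs]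
  rw [_root_.psum, Finset.sum_update_of_mem hsS, Finset.sdiff_singleton_eq_erase,
      Finset.sum_update_of_mem hrS, Finset.sdiff_singleton_eq_erase]
  rw [_root_.psum, ← Finset.add_sum_erase S a hsS, ← Finset.add_sum_erase (S.erase s) a hrS]
  ring

lemma flat_decomp (a : Fin n → ℕ) (k : ℕ) :
    flat a = ((List.ofFn a).take k).filter (· ≠ 0) ++ ((List.ofFn a).drop k).filter (· ≠ 0) := by
  rw [flat, ← List.filter_append, List.take_append_drop]

lemma take_ofFn_congr {a b : Fin n → ℕ} {k : ℕ}
    (h : ∀ i : Fin n, (i:ℕ) < k → a i = b i) :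
    (List.ofFn a).take k = (List.ofFn b).take k := by
  apply List.ext_getElem (by simp)
  intro i h1 h2
  have hik : i < k := by simp at h1; omega
  simp only [List.getElem_take, List.getElem_ofFn]
  exact h _ (by simpa)

lemma drop_ofFn_congr {a b : Fin n → ℕ} {k : ℕ}
    (h : ∀ i : Fin n, k ≤ (i:ℕ) → a i = b i) :
    (List.ofFn a).drop k = (List.ofFn b).drop k := by
  apply List.ext_getElem (by simp)
  intro i h1 h2
  simp only [List.getElem_drop, List.getElem_ofFn]
  exact h _ (by simp)

lemma drop_ofFn_cons (a : Fin n → ℕ) {k : ℕ} (h : k < n) :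
    (List.ofFn a).drop k = a ⟨k, h⟩ :: (List.ofFn a).drop (k+1) := by
  rw [List.drop_eq_getElem_cons (by simpa using h)]
  congr 1
  simp

lemma filter_drop_zeros (l : List ℕ) {r s : ℕ} (hrs : r ≤ s) (hs : s ≤ l.length)
    (h : ∀ i (hi : i < l.length), r ≤ i → i < s → l[i] = 0) :
    (l.drop r).filter (· ≠ 0) = (l.drop s).filter (· ≠ 0) := by
  induction s, hrs using Nat.le_induction with
  | base => rfl
  | succ s hrs ih =>
    have hsl : s < l.length := hs
    rw [ih (le_of_lt hsl) (fun i hi h1 h2 => h i hi h1 (by omega)),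
        List.drop_eq_getElem_cons hsl]
    simp [h s hsl hrs (by omega)]

lemma auxZ (b : Fin n → ℕ) :
    ∀ (m : ℕ) (a : Fin n → ℕ) (t : ℕ), n ≤ t + m →
      (∀ i : Fin n, (i:ℕ) < t → a i = b i) → Dom a b → flat a = flat b →
      Relation.ReflTransGen ZSwap a b := by
  intro m
  induction m with
  | zero =>
    intro a t hn hagree _ _
    have : a = b := funext fun i => hagree i (by omega)
    exact this ▸ Relation.ReflTransGen.refl
  | succ m ih =>
    intro a t hn hagree hdom hflat
    by_cases hab : a = b
    · exact hab ▸ Relation.ReflTransGen.refl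
    -- the first position where a and b disagree
    have hex : ∃ k, ∃ h : k < n, a ⟨k,h⟩ ≠ b ⟨k,h⟩ := by
      by_contra hc
      push_neg at hc
      exact hab (funext fun i => by simpa using hc i i.isLt)
    set r := Nat.find hex with hrdef
    obtain ⟨hrn, hrneq⟩ : ∃ h : r < n, a ⟨r,h⟩ ≠ b ⟨r,h⟩ := Nat.find_spec hex
    set rF : Fin n := ⟨r, hrn⟩
    have hrmin : ∀ i : Fin n, (i:ℕ) < r → a i = b i := by
      intro i hi
      have := Nat.find_min hex hi
      push_neg at this
      simpa using this i.isLt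
    have htr : t ≤ r := by
      by_contra hc
      push_neg at hc
      exact hrneq (hagree rF hc)
    -- the filtered suffixes agree
    have hdropfilter : ((List.ofFn a).drop r).filter (· ≠ 0)
        = ((List.ofFn b).drop r).filter (· ≠ 0) := by
      have h1 := flat_decomp a r
      have h2 := flat_decomp b r
      rw [h1, h2, take_ofFn_congr hrmin] at hflat
      exact List.append_cancel_left hflat
    have hpsr : psum a r = psum b r := psum_congr hrmin
    -- a rF = 0 and b rF ≠ 0
    have haszero : a rF = 0 ∧ b rF ≠ 0 := by
      rw [drop_ofFn_cons a hrn, drop_ofFn_cons b hrn] at hdropfilter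
      by_cases ha0 : a rF = 0
      · refine ⟨ha0, ?_⟩
        intro hb0
        exact hrneq (ha0.trans hb0.symm)
      · exfalso
        by_cases hb0 : b rF = 0
        · -- dominance fails at r+1
          have h1 : psum a (r+1) = psum a r + a rF := psum_succ a hrn
          have h2 : psum b (r+1) = psum b r + b rF := psum_succ b hrn
          have := hdom (r+1)
          rw [h1, h2, hb0, hpsr] at this
          omega
        · -- both heads nonzero, so they must be equal
          rw [List.filter_cons_of_pos (by simpa using ha0),
              List.filter_cons_of_pos (by simpa using hb0)] at hdropfilter
          exact hrneq (List.head_eq_of_cons_eq hdropfilter)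
    obtain ⟨har0, hbr0⟩ := haszero
    -- tail equality
    have htail : ((List.ofFn a).drop (r+1)).filter (· ≠ 0)
        = b rF :: ((List.ofFn b).drop (r+1)).filter (· ≠ 0) := by
      rw [drop_ofFn_cons a hrn, drop_ofFn_cons b hrn] at hdropfilter
      rw [List.filter_cons_of_neg (by simpa using har0),
          List.filter_cons_of_pos (by simpa using hbr0)] at hdropfilter
      exact hdropfilter
    -- there is a nonzero entry of a after r
    have hexs : ∃ k, ∃ h : k < n, r < k ∧ a ⟨k,h⟩ ≠ 0 := by
      have hmem : b rF ∈ ((List.ofFn a).drop (r+1)).filter (· ≠ 0) := by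
        rw [htail]; exact List.mem_cons_self
      have hmem2 : b rF ∈ (List.ofFn a).drop (r+1) := (List.mem_filter.mp hmem).1
      obtain ⟨i, hi, hval⟩ := List.mem_iff_getElem.mp hmem2
      have hlen : i < n - (r+1) := by simpa using hi
      have hval' : a ⟨r+1+i, by omega⟩ = b rF := by
        rw [List.getElem_drop] at hval
        simpa using hval
      exact ⟨r+1+i, by omega, by omega, by rw [hval']; exact hbr0⟩
    set s := Nat.find hexs with hsdef
    obtain ⟨hsn, hrs, hasne⟩ : ∃ h : s < n, r < s ∧ a ⟨s,h⟩ ≠ 0 := Nat.find_spec hexs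
    set sF : Fin n := ⟨s, hsn⟩
    have hzero_between : ∀ i : Fin n, r ≤ (i:ℕ) → (i:ℕ) < s → a i = 0 := by
      intro i h1 h2
      rcases eq_or_lt_of_le h1 with heq | hlt
      · have : i = rF := Fin.ext heq.symm
        rw [this]; exact har0
      · have := Nat.find_min hexs h2
        push_neg at this
        have := this i.isLt (by omega)
        simpa using this
    -- filtered drop past the zeros: a s = b r and the remaining tails agree
    have hstep : a sF :: ((List.ofFn a).drop (s+1)).filter (· ≠ 0)
        = b rF :: ((List.ofFn b).drop (r+1)).filter (· ≠ 0) := by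
      have hzz : ((List.ofFn a).drop (r+1)).filter (· ≠ 0)
          = ((List.ofFn a).drop s).filter (· ≠ 0) := by
        apply filter_drop_zeros _ (by omega) (by simpa using le_of_lt hsn)
        intro i hi h1 h2
        rw [List.getElem_ofFn]
        exact hzero_between _ (by simpa using Nat.le_of_succ_le h1) (by simpa using h2)
      rw [hzz, drop_ofFn_cons a hsn, List.filter_cons_of_pos (by simpa using hasne)] at htail
      exact htail
    have hasb : a sF = b rF := List.head_eq_of_cons_eq hstep
    have htail2 : ((List.ofFn a).drop (s+1)).filter (· ≠ 0)
        = ((List.ofFn b).drop (r+1)).filter (· ≠ 0) := List.tail_eq_of_cons_eq hstep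
    -- perform the swap
    set a' := Function.update (Function.update a rF (a sF)) sF (a rF) with ha'def
    have hrsF : rF ≠ sF := by simp [Fin.ext_iff, rF, sF]; omega
    have hz : ZSwap a a' := ⟨rF, sF, (show r < s by omega), har0, hasne, rfl⟩
    have ha'r : a' rF = a sF := by
      rw [ha'def, Function.update_of_ne hrsF, Function.update_self]
    have ha's : a' sF = 0 := by rw [ha'def, Function.update_self]; exact har0
    have ha'other : ∀ i : Fin n, i ≠ rF → i ≠ sF → a' i = a i := by
      intro i h1 h2
      rw [ha'def, Function.update_of_ne h2, Function.update_of_ne h1]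
    -- agreement below r+1
    have hagree' : ∀ i : Fin n, (i:ℕ) < r + 1 → a' i = b i := by
      intro i hi
      rcases Nat.lt_succ_iff_lt_or_eq.mp hi with hlt | heq
      · rw [ha'other i (by simp [Fin.ext_iff, rF, sF]; omega) (by simp [Fin.ext_iff, rF, sF]; omega)]
        exact hrmin i hlt
      · have : i = rF := Fin.ext heq
        rw [this, ha'r, hasb]
    -- dominance
    have hdom' : Dom a' b := by
      intro k
      rcases le_or_gt k r with hk | hk
      · have : psum a' k = psum a k := by
          apply psum_congr
          intro i hi
          exact ha'other i (by simp [Fin.ext_iff, rF, sF]; omega) (by simp [Fin.ext_iff, rF, sF]; omega)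
        rw [this]; exact hdom k
      · rcases le_or_gt k s with hks | hks
        · have h1 : psum a' k = psum a' (r+1) := by
            apply psum_stable (by omega)
            intro i h1 h2
            rw [ha'other i (by simp [Fin.ext_iff, rF, sF]; omega) (by simp [Fin.ext_iff, rF, sF]; omega)]
            exact hzero_between i (by omega) (by omega)
          have h2 : psum a' (r+1) = psum b (r+1) := psum_congr hagree'
          rw [h1, h2]
          exact psum_mono b (by omega)
        · have : psum a' k = psum a k := psum_swap a rF sF hrsF (by simpa using (by omega : r < k)) (by simpa using hks)
          rw [this]; exact hdom k
    -- flat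
    have hflat' : flat a' = flat b := by
      rw [flat_decomp a' (r+1), flat_decomp b (r+1), take_ofFn_congr hagree']
      congr 1
      have hzz : ((List.ofFn a').drop (r+1)).filter (· ≠ 0)
          = ((List.ofFn a').drop (s+1)).filter (· ≠ 0) := by
        apply filter_drop_zeros _ (by omega) (by simpa using hsn)
        intro i hi h1 h2
        rw [List.getElem_ofFn]
        by_cases his : i = s
        · simpa [his] using ha's
        · rw [ha'other _ (by simp [Fin.ext_iff, rF, sF]; omega) (by simp [Fin.ext_iff, rF, sF]; omega)]
          exact hzero_between _ (by simpa using (by omega : r ≤ i)) (by simpa using (by omega : i < s))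
      have hdd : (List.ofFn a').drop (s+1) = (List.ofFn a).drop (s+1) := by
        apply drop_ofFn_congr
        intro i hi
        exact ha'other i (by simp [Fin.ext_iff, rF, sF]; omega) (by simp [Fin.ext_iff, rF, sF]; omega)
      rw [hzz, hdd, htail2]
    exact Relation.ReflTransGen.head hz (ih a' (r+1) (by omega) hagree' hdom' hflat')

end AuxLemmas

/-- every weak composition `b ≥ a` with `flat(b) = flat(a)` is
obtainable from `a` by a sequence of left swaps each of which exchanges a
nonzero entry with a zero entry to its left; consequently `b ∈ lswap(a)`. -/
theorem dominating_same_flat_mem_lswap {n : ℕ} (a b : Fin n → ℕ)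
    (hd : Dom a b) (hf : flat b = flat a) :
    Relation.ReflTransGen ZSwap a b ∧ Relation.ReflTransGen LSwap a b := by
  have hz : Relation.ReflTransGen ZSwap a b :=
    auxZ b n a 0 (by omega) (fun i hi => absurd hi (by omega)) hd hf.symm
  refine ⟨hz, Relation.ReflTransGen.mono ?_ a b hz⟩
  rintro x y ⟨i, j, hij, h0, hne, hc⟩
  exact ⟨i, j, hij, by simp [h0], hc⟩

end
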